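/- Let G be an invertible symmetric real n×n matrix, N a real n×q matrix with NᵀG⁻¹N negative definite, n⁺ ∈ ℝⁿ with N₊ := [N n⁺] satisfying N₊ᵀG⁻¹N₊ invertible, c ∈ ℝⁿ, g(w) = Gw + c, h ∈ ℝ^q, h_p ∈ ℝ. Write P* = (PᵀG⁻¹P)⁻¹PᵀG⁻¹, H = G⁻¹(I − N N*), H₊ = G⁻¹(I − N₊N₊*). Suppose z ∈ ℝⁿ satisfies the V-triple conditions: Nᵀz + h = 0, n⁺ᵀz + h_p > 0, H₊ g(z) = 0, and u := −N₊* g(z) ≤ 0 componentwise. Set d = H n⁺, r = −N* n⁺, and suppose k ∈ {1,…,q} satisfies r_k < 0 and t₁ := u_k/r_k = min{ u_j/r_j : r_j < 0 }, and that either dᵀn⁺ ≥ 0, or dᵀn⁺ < 0 and t₁ < −(n⁺ᵀz + h_p)/(dᵀn⁺). Let N₋ be N with its k-th column removed, h₋ the corresponding subvector of h, and assume [N₋ n⁺]ᵀG⁻¹[N₋ n⁺] is invertible. Then z̄ = z + t₁ d satisfies the V-triple conditions for the reduced set: N₋ᵀz̄ + h₋ = 0; n⁺ᵀz̄ + h_p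 > 0; H₋₊ g(z̄) = 0 where H₋₊ = G⁻¹(I − [N₋ n⁺][N₋ n⁺]*); −[N₋ n⁺]* g(z̄) ≤ 0 componentwise; and N₋ᵀG⁻¹N₋ is negative definite. -/

import Mathlib

open Matrix

private lemma sum_subtype_ne {q : ℕ} (k : Fin q) (f : Fin q → ℝ) (hf : f k = 0) :
    ∑ j : {j : Fin q // j ≠ k}, f j.val = ∑ j, f j := by
  rw [← Finset.sum_subtype (Finset.univ.erase k)
    (fun x => by simp [Finset.mem_erase]) f]
  exact Finset.sum_erase _ hf

private lemma sub_mulVec {n q : ℕ} (k : Fin q) (N : Matrix (Fin n) (Fin q) ℝ)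
    (Nm : Matrix (Fin n) {j : Fin q // j ≠ k} ℝ)
    (hNm : Nm = Matrix.of fun i j => N i j.val)
    (y : Fin q → ℝ) (hyk : y k = 0) :
    Nm *ᵥ (fun j => y j.val) = N *ᵥ y := by
  funext i
  simp only [hNm, Matrix.mulVec, dotProduct, Matrix.of_apply]
  exact sum_subtype_ne k (fun j => N i j * y j) (by simp [hyk])

/-- Partial step of the dual algorithm: taking a dual step of length
`t₁ = u_k / r_k` and dropping the `k`-th active constraint yields a V-triple for the
reduced active set. -/
theorem stmt_13 {n q : ℕ} (G : Matrix (Fin n) (Fin n) ℝ)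
    (hGsym : G.IsSymm) (hG : IsUnit G.det)
    (N : Matrix (Fin n) (Fin q) ℝ)
    (hnd : (-(Nᵀ * G⁻¹ * N)).PosDef)
    (nplus : Fin n → ℝ)
    (Nplus : Matrix (Fin n) (Fin q ⊕ Unit) ℝ)
    (hNplus : Nplus = Matrix.fromCols N (Matrix.replicateCol Unit nplus))
    (hNp : IsUnit (Nplusᵀ * G⁻¹ * Nplus).det)
    (c : Fin n → ℝ) (g : (Fin n → ℝ) → Fin n → ℝ) (hg : ∀ w, g w = G *ᵥ w + c)
    (h : Fin q → ℝ) (hp : ℝ)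
    (H Hplus : Matrix (Fin n) (Fin n) ℝ)
    (hH : H = G⁻¹ * (1 - N * ((Nᵀ * G⁻¹ * N)⁻¹ * Nᵀ * G⁻¹)))
    (hHplus : Hplus = G⁻¹ * (1 - Nplus * ((Nplusᵀ * G⁻¹ * Nplus)⁻¹ * Nplusᵀ * G⁻¹)))
    -- the V-triple conditions at z
    (z : Fin n → ℝ)
    (hact : Nᵀ *ᵥ z + h = 0)
    (hviol : nplus ⬝ᵥ z + hp > 0)
    (hstat : Hplus *ᵥ g z = 0)
    (u : Fin q ⊕ Unit → ℝ)
    (hu : u = -(((Nplusᵀ * G⁻¹ * Nplus)⁻¹ * Nplusᵀ * G⁻¹) *ᵥ g z))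
    (hu0 : ∀ j, u j ≤ 0)
    -- step direction and dual direction
    (d : Fin n → ℝ) (hd : d = H *ᵥ nplus)
    (r : Fin q → ℝ) (hr : r = -(((Nᵀ * G⁻¹ * N)⁻¹ * Nᵀ * G⁻¹) *ᵥ nplus))
    -- the dropped index and the dual step length
    (k : Fin q) (hrk : r k < 0)
    (t₁ : ℝ) (ht₁ : t₁ = u (Sum.inl k) / r k)
    (hmin : ∀ j : Fin q, r j < 0 → t₁ ≤ u (Sum.inl j) / r j)
    (hstep : 0 ≤ d ⬝ᵥ nplus ∨
      (d ⬝ᵥ nplus < 0 ∧ t₁ < -(nplus ⬝ᵥ z + hp) / (d ⬝ᵥ nplus)))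
    -- the reduced active set with the k-th column removed
    (Nm : Matrix (Fin n) {j : Fin q // j ≠ k} ℝ)
    (hNm : Nm = Matrix.of fun i j => N i j.val)
    (hm : {j : Fin q // j ≠ k} → ℝ) (hhm : hm = fun j => h j.val)
    (Nmplus : Matrix (Fin n) ({j : Fin q // j ≠ k} ⊕ Unit) ℝ)
    (hNmplus : Nmplus = Matrix.fromCols Nm (Matrix.replicateCol Unit nplus))
    (hNmp : IsUnit (Nmplusᵀ * G⁻¹ * Nmplus).det)
    (Hmplus : Matrix (Fin n) (Fin n) ℝ)
    (hHmplus : Hmplus =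
      G⁻¹ * (1 - Nmplus * ((Nmplusᵀ * G⁻¹ * Nmplus)⁻¹ * Nmplusᵀ * G⁻¹)))
    (zbar : Fin n → ℝ) (hzbar : zbar = z + t₁ • d) :
    Nmᵀ *ᵥ zbar + hm = 0 ∧
    nplus ⬝ᵥ zbar + hp > 0 ∧
    Hmplus *ᵥ g zbar = 0 ∧
    (∀ j, (-(((Nmplusᵀ * G⁻¹ * Nmplus)⁻¹ * Nmplusᵀ * G⁻¹) *ᵥ g zbar)) j ≤ 0) ∧
    (-(Nmᵀ * G⁻¹ * Nm)).PosDef := by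
  -- basic invertibility facts
  have hNdet : IsUnit (Nᵀ * G⁻¹ * N).det := by
    have hpos := hnd.det_pos
    rw [Matrix.det_neg] at hpos
    refine isUnit_iff_ne_zero.mpr fun h0 => ?_
    rw [h0, mul_zero] at hpos; exact lt_irrefl 0 hpos
  have ht₁0 : 0 ≤ t₁ := by
    rw [ht₁]; exact div_nonneg_iff.mpr (Or.inr ⟨hu0 _, hrk.le⟩)
  -- N^T * H = 0
  have hNH : Nᵀ * H = 0 := by
    rw [hH, Matrix.mul_sub, Matrix.mul_one, Matrix.mul_sub]
    simp only [← Matrix.mul_assoc]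
    rw [Matrix.mul_nonsing_inv _ hNdet, Matrix.one_mul, sub_self]
  have hNd : Nᵀ *ᵥ d = 0 := by
    rw [hd, Matrix.mulVec_mulVec, hNH, Matrix.zero_mulVec]
  -- Part 1
  have hpart1 : Nmᵀ *ᵥ zbar + hm = 0 := by
    have h1 : Nᵀ *ᵥ zbar + h = 0 := by
      rw [hzbar, Matrix.mulVec_add, Matrix.mulVec_smul, hNd, smul_zero, add_zero]
      exact hact
    funext j
    have h2 := congrFun h1 j.val
    simp only [Pi.add_apply, Pi.zero_apply] at h2 ⊢
    rw [hhm]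
    have : (Nmᵀ *ᵥ zbar) j = (Nᵀ *ᵥ zbar) j.val := by
      simp [hNm, Matrix.mulVec, dotProduct, Matrix.transpose]
    rw [this]; exact h2
  -- Part 2
  have hdotfact : nplus ⬝ᵥ zbar + hp = (nplus ⬝ᵥ z + hp) + t₁ * (d ⬝ᵥ nplus) := by
    rw [hzbar, dotProduct_add, dotProduct_smul, dotProduct_comm nplus d,
      smul_eq_mul]
    ring
  have hpart2 : nplus ⬝ᵥ zbar + hp > 0 := by
    rw [hdotfact]
    rcases hstep with h1 | ⟨h1, h2⟩
    · have := mul_nonneg ht₁0 h1; linarith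
    · rw [lt_div_iff_of_neg h1] at h2; linarith
  -- g z = Nplus *ᵥ (-u)
  have hGHplus : G * Hplus = 1 - Nplus * ((Nplusᵀ * G⁻¹ * Nplus)⁻¹ * Nplusᵀ * G⁻¹) := by
    rw [hHplus, ← Matrix.mul_assoc, Matrix.mul_nonsing_inv _ hG, Matrix.one_mul]
  have hgz : g z = Nplus *ᵥ (-u) := by
    have h1 : G *ᵥ (Hplus *ᵥ g z) = 0 := by rw [hstat, Matrix.mulVec_zero]
    rw [Matrix.mulVec_mulVec, hGHplus, Matrix.sub_mulVec, Matrix.one_mulVec,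
      sub_eq_zero] at h1
    rw [hu, neg_neg, Matrix.mulVec_mulVec]
    exact h1
  -- G *ᵥ d = nplus + N *ᵥ r
  have hGH : G * H = 1 - N * ((Nᵀ * G⁻¹ * N)⁻¹ * Nᵀ * G⁻¹) := by
    rw [hH, ← Matrix.mul_assoc, Matrix.mul_nonsing_inv _ hG, Matrix.one_mul]
  have hGd : G *ᵥ d = nplus + N *ᵥ r := by
    rw [hd, Matrix.mulVec_mulVec, hGH, Matrix.sub_mulVec, Matrix.one_mulVec,
      ← Matrix.mulVec_mulVec, hr, Matrix.mulVec_neg, ← sub_eq_add_neg]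
  -- g zbar
  have hgzbar : g zbar = g z + t₁ • (G *ᵥ d) := by
    rw [hg, hg, hzbar, Matrix.mulVec_add, Matrix.mulVec_smul]; abel
  -- the combined multiplier vector
  set y : Fin q → ℝ := fun j => t₁ * r j - u (Sum.inl j) with hy
  have hyk : y k = 0 := by
    simp only [hy, ht₁]
    rw [div_mul_cancel₀ _ hrk.ne]; ring
  set x : {j : Fin q // j ≠ k} ⊕ Unit → ℝ :=
    Sum.elim (fun j => y j.val) (fun _ => t₁ - u (Sum.inr ())) with hx
  have hcol : ∀ (w : Unit → ℝ), Matrix.replicateCol Unit nplus *ᵥ w = w () • nplus := by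
    intro w; funext i
    simp [Matrix.mulVec, dotProduct, Matrix.replicateCol, mul_comm]
  have hkey : g zbar = Nmplus *ᵥ x := by
    have hNy : N *ᵥ y = t₁ • (N *ᵥ r) - N *ᵥ (fun j => u (Sum.inl j)) := by
      have : y = t₁ • r - (fun j => u (Sum.inl j)) := by
        funext j; simp [hy]
      rw [this, Matrix.mulVec_sub, Matrix.mulVec_smul]
    have hsplit : -u = Sum.elim (fun j => -u (Sum.inl j)) (fun t => -u (Sum.inr t)) := by
      funext j; cases j <;> rfl
    have hL : g zbar = N *ᵥ (fun j => -u (Sum.inl j)) + (-u (Sum.inr ())) • nplus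
        + (t₁ • nplus + t₁ • (N *ᵥ r)) := by
      rw [hgzbar, hgz, hGd, hNplus, hsplit, Matrix.fromCols_mulVec_sumElim, hcol,
        smul_add]
      try abel
    have hR : Nmplus *ᵥ x = N *ᵥ y + (t₁ - u (Sum.inr ())) • nplus := by
      rw [hNmplus, hx, Matrix.fromCols_mulVec_sumElim, hcol,
        sub_mulVec k N Nm hNm y hyk]
    rw [hL, hR, hNy]
    have hm1 : N *ᵥ (fun j => -u (Sum.inl j)) = -(N *ᵥ (fun j => u (Sum.inl j))) := by
      rw [show (fun j => -u (Sum.inl j)) = -(fun j => u (Sum.inl j)) from rfl,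
        Matrix.mulVec_neg]
    rw [hm1, sub_smul]
    module
  -- cancellation for the reduced system
  have hSm : ((Nmplusᵀ * G⁻¹ * Nmplus)⁻¹ * Nmplusᵀ * G⁻¹) * Nmplus = 1 := by
    rw [Matrix.mul_assoc, Matrix.mul_assoc, ← Matrix.mul_assoc Nmplusᵀ G⁻¹ Nmplus,
      Matrix.nonsing_inv_mul _ hNmp]
  -- Part 3
  have hpart3 : Hmplus *ᵥ g zbar = 0 := by
    rw [hkey, Matrix.mulVec_mulVec]
    have : Hmplus * Nmplus = 0 := by
      rw [hHmplus, Matrix.mul_assoc, Matrix.sub_mul, Matrix.one_mul,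
        Matrix.mul_assoc, hSm, Matrix.mul_one, sub_self, Matrix.mul_zero]
    rw [this, Matrix.zero_mulVec]
  -- Part 4
  have hpart4 : ∀ j, (-(((Nmplusᵀ * G⁻¹ * Nmplus)⁻¹ * Nmplusᵀ * G⁻¹) *ᵥ g zbar)) j ≤ 0 := by
    have hxeq : ((Nmplusᵀ * G⁻¹ * Nmplus)⁻¹ * Nmplusᵀ * G⁻¹) *ᵥ g zbar = x := by
      rw [hkey, Matrix.mulVec_mulVec, hSm, Matrix.one_mulVec]
    intro j
    rw [hxeq]
    simp only [Pi.neg_apply, neg_nonpos]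
    rcases j with jj | t
    · show (0:ℝ) ≤ t₁ * r jj.val - u (Sum.inl jj.val)
      rcases lt_or_ge (r jj.val) 0 with hneg | hpos
      · have := hmin jj.val hneg
        rw [le_div_iff_of_neg hneg] at this
        linarith
      · have h1 : 0 ≤ t₁ * r jj.val := mul_nonneg ht₁0 hpos
        have h2 := hu0 (Sum.inl jj.val)
        linarith
    · show (0:ℝ) ≤ t₁ - u (Sum.inr ())
      have := hu0 (Sum.inr ())
      linarith
  -- Part 5
  have hpart5 : (-(Nmᵀ * G⁻¹ * Nm)).PosDef := by
    rw [Matrix.posDef_iff_dotProduct_mulVec]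
    constructor
    · -- Hermitian
      rw [Matrix.IsHermitian, Matrix.conjTranspose_eq_transpose_of_trivial]
      have hGinv : G⁻¹ᵀ = G⁻¹ := by
        rw [Matrix.transpose_nonsing_inv, hGsym]
      show (-(Nmᵀ * G⁻¹ * Nm))ᵀ = -(Nmᵀ * G⁻¹ * Nm)
      rw [Matrix.transpose_neg, Matrix.transpose_mul, Matrix.transpose_mul,
        Matrix.transpose_transpose, hGinv, Matrix.mul_assoc]
    · intro v hv
      set vt : Fin q → ℝ := fun j => if hj : j = k then 0 else v ⟨j, hj⟩ with hvt
      have hvtk : vt k = 0 := by simp [hvt]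
      have hvtval : (fun j : {j : Fin q // j ≠ k} => vt j.val) = v := by
        funext j; simp [hvt, j.prop]
      have hvt0 : vt ≠ 0 := by
        intro h0
        apply hv
        funext j
        have := congrFun h0 j.val
        simpa [hvt, j.prop] using this
      have hq := hnd.dotProduct_mulVec_pos hvt0
      have hmv : Nm *ᵥ v = N *ᵥ vt := by
        rw [← hvtval]; exact sub_mulVec k N Nm hNm vt hvtk
      have hdot : ∀ w : Fin n → ℝ, v ⬝ᵥ (Nmᵀ *ᵥ w) = vt ⬝ᵥ (Nᵀ *ᵥ w) := by
        intro w
        have hentry : ∀ j : {j : Fin q // j ≠ k}, (Nmᵀ *ᵥ w) j = (Nᵀ *ᵥ w) j.val := by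
          intro j; simp [hNm, Matrix.mulVec, dotProduct, Matrix.transpose]
        simp only [dotProduct]
        calc ∑ j : {j : Fin q // j ≠ k}, v j * (Nmᵀ *ᵥ w) j
            = ∑ j : {j : Fin q // j ≠ k}, vt j.val * (Nᵀ *ᵥ w) j.val := by
              refine Finset.sum_congr rfl fun j _ => ?_
              rw [hentry, ← hvtval]
          _ = ∑ j, vt j * (Nᵀ *ᵥ w) j :=
              sum_subtype_ne k (fun j => vt j * (Nᵀ *ᵥ w) j) (by simp [hvtk])
      have hquad : v ⬝ᵥ ((Nmᵀ * G⁻¹ * Nm) *ᵥ v) = vt ⬝ᵥ ((Nᵀ * G⁻¹ * N) *ᵥ vt) := by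
        rw [← Matrix.mulVec_mulVec, ← Matrix.mulVec_mulVec, hmv, hdot,
          Matrix.mulVec_mulVec, Matrix.mulVec_mulVec]
      have hstar : (star v : {j : Fin q // j ≠ k} → ℝ) = v := by simp
      have hstar' : (star vt : Fin q → ℝ) = vt := by simp
      rw [hstar' ] at hq
      rw [hstar, Matrix.neg_mulVec, dotProduct_neg]
      rw [Matrix.neg_mulVec, dotProduct_neg] at hq
      rw [hquad]
      exact hq
  exact ⟨hpart1, hpart2, hpart3, hpart4, hpart5⟩
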